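/- For every g ∈ L²(I) the initial value problem for the continuum limit equation ∂u/∂t(t,x) = ω + p∫₀¹ sin(u(t,y)−u(t,x)) dy − K∫₀¹ W₂(x,y) sin(2(u(t,y)−u(t,x))) dy with u(0,·) = g has a unique solution u ∈ C¹(ℝ, L²(I)); moreover, for every τ > 0 the map sending the initial datum g ∈ L²(I) to the solution restricted to [−τ,τ], regarded as an element of C([−τ,τ], L²(I)) with the supremum norm, is continuous. -/

import Mathlib

open MeasureTheory Real Set Filter

noncomputable section

/-- The Lebesgue measure restricted to the interval `I = [0,1]`. -/
def μI : MeasureTheory.Measure ℝ := MeasureTheory.volume.restrict (Set.Icc (0:ℝ) 1)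

/-- The space `L²(I)` of square-integrable real functions on `I = [0,1]`. -/
abbrev L2I : Type := MeasureTheory.Lp ℝ 2 μI

/-- The graphon of the `κ`-nearest neighbor graph. -/
def W2 (κ : ℝ) (x y : ℝ) : ℝ := if |x - y| ≤ κ ∨ 1 - κ ≤ |x - y| then 1 else 0

/-- The right-hand side of the continuum limit equation. -/
def CLrhs (ω p K κ : ℝ) (f : ℝ → ℝ) (x : ℝ) : ℝ :=
  ω + p * ∫ y in Set.Icc (0:ℝ) 1, Real.sin (f y - f x)
    - K * ∫ y in Set.Icc (0:ℝ) 1, W2 κ x y * Real.sin (2 * (f y - f x))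

/-- `u : ℝ → L²(I)` is a (C¹) solution of the continuum limit equation. -/
def IsCLSol (ω p K κ : ℝ) (u : ℝ → L2I) : Prop :=
  ContDiff ℝ 1 u ∧
  ∀ t : ℝ, ∃ v : L2I, HasDerivAt u v t ∧ (v : ℝ → ℝ) =ᵐ[μI] CLrhs ω p K κ (u t)


open scoped NNReal ENNReal Topology

namespace CLAux


variable {E : Type*} [NormedAddCommGroup E] [NormedSpace ℝ E]

/-- Elementary integral bound used in the Picard iteration estimate. -/
lemma key_int_bound {h : ℝ → E} (hh : Continuous h) (n : ℕ) {c : ℝ} (hc : 0 ≤ c) (t : ℝ)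
    (hb : ∀ s ∈ Set.uIcc (0:ℝ) t, ‖h s‖ ≤ c * |s| ^ n) :
    ‖∫ s in (0:ℝ)..t, h s‖ ≤ c * |t| ^ (n + 1) / (n + 1) := by
  rcases le_total 0 t with ht | ht
  · have h1 : ‖∫ s in (0:ℝ)..t, h s‖ ≤ ∫ s in (0:ℝ)..t, ‖h s‖ :=
      intervalIntegral.norm_integral_le_integral_norm ht
    have h2 : (∫ s in (0:ℝ)..t, ‖h s‖) ≤ ∫ s in (0:ℝ)..t, c * s ^ n := by
      apply intervalIntegral.integral_mono_on ht (hh.norm.intervalIntegrable _ _)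
        ((continuous_const.mul (continuous_pow n)).intervalIntegrable _ _)
      intro s hs
      have hs' : s ∈ Set.uIcc (0:ℝ) t := by
        rw [Set.uIcc_of_le ht]; exact hs
      have := hb s hs'
      rwa [abs_of_nonneg hs.1] at this
    have h3 : (∫ s in (0:ℝ)..t, c * s ^ n) = c * t ^ (n+1) / (n+1) := by
      rw [intervalIntegral.integral_const_mul, integral_pow]
      ring
    rw [abs_of_nonneg ht]
    calc ‖∫ s in (0:ℝ)..t, h s‖ ≤ ∫ s in (0:ℝ)..t, ‖h s‖ := h1
      _ ≤ _ := h2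
      _ = _ := h3
  · have hsymm : (∫ s in (0:ℝ)..t, h s) = -∫ s in t..(0:ℝ), h s :=
      (intervalIntegral.integral_symm _ _)
    have h1 : ‖∫ s in t..(0:ℝ), h s‖ ≤ ∫ s in t..(0:ℝ), ‖h s‖ :=
      intervalIntegral.norm_integral_le_integral_norm ht
    have h2 : (∫ s in t..(0:ℝ), ‖h s‖) ≤ ∫ s in t..(0:ℝ), c * (-s) ^ n := by
      apply intervalIntegral.integral_mono_on ht (hh.norm.intervalIntegrable _ _)
        ((continuous_const.mul ((continuous_neg).pow n)).intervalIntegrable _ _)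
      intro s hs
      have hs' : s ∈ Set.uIcc (0:ℝ) t := by
        rw [Set.uIcc_of_ge ht]; exact hs
      have := hb s hs'
      rwa [abs_of_nonpos hs.2] at this
    have h3 : (∫ s in t..(0:ℝ), c * (-s) ^ n) = c * (-t) ^ (n+1) / (n+1) := by
      rw [intervalIntegral.integral_const_mul]
      have : (∫ s in t..(0:ℝ), (-s) ^ n) = ∫ s in (0:ℝ)..(-t), s ^ n := by
        have := intervalIntegral.integral_comp_neg (a := t) (b := (0:ℝ)) (fun s => s ^ n)
        simpa using this
      rw [this, integral_pow]
      ring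
    rw [hsymm, norm_neg, abs_of_nonpos ht]
    calc ‖∫ s in t..(0:ℝ), h s‖ ≤ ∫ s in t..(0:ℝ), ‖h s‖ := h1
      _ ≤ _ := h2
      _ = _ := h3

variable [CompleteSpace E] {L : ℝ≥0} {F : E → E}

/-- Solutions on `[-a, a]` of the autonomous ODE with globally Lipschitz RHS. -/
lemma exists_local_sol (hF : LipschitzWith L F) (x₀ : E) {a : ℝ} (ha : 0 < a) :
    ∃ w : ℝ → E, w 0 = x₀ ∧ ∀ t ∈ Set.Icc (-a) a, HasDerivAt w (F (w t)) t := by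
  have hab : (-a) ≤ a := by linarith
  set Ic : Set ℝ := Set.Icc (-a) a with hIc
  have h0 : (0:ℝ) ∈ Ic := ⟨by linarith, by linarith⟩
  let proj : ℝ → Ic := fun t => Set.projIcc (-a) a hab t
  have hproj : Continuous proj := continuous_projIcc
  have hprojmem : ∀ s : ℝ, s ∈ Ic → ((proj s : ℝ)) = s := fun s hs => by
    simp only [proj, Set.projIcc_of_mem hab hs]
  -- the extension operator
  have hext : ∀ u : C(Ic, E), Continuous fun s : ℝ => F (u (proj s)) := fun u =>
    hF.continuous.comp (u.continuous.comp hproj)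
  have hderiv : ∀ (u : C(Ic, E)) (t : ℝ),
      HasDerivAt (fun t : ℝ => x₀ + ∫ s in (0:ℝ)..t, F (u (proj s))) (F (u (proj t))) t := by
    intro u t
    have := intervalIntegral.integral_hasDerivAt_right
      ((hext u).intervalIntegrable 0 t)
      ((hext u).stronglyMeasurable.stronglyMeasurableAtFilter)
      (hext u).continuousAt
    simpa using this.const_add x₀
  have hPc : ∀ u : C(Ic, E), Continuous fun t : ℝ => x₀ + ∫ s in (0:ℝ)..t, F (u (proj s)) := by
    intro u
    exact continuous_iff_continuousAt.2 fun t => (hderiv u t).continuousAt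
  let P : C(Ic, E) → C(Ic, E) := fun u =>
    ⟨fun t : Ic => x₀ + ∫ s in (0:ℝ)..(t:ℝ), F (u (proj s)), (hPc u).comp continuous_subtype_val⟩
  -- iteration bound
  have key : ∀ n : ℕ, ∀ u v : C(Ic, E), ∀ t : Ic,
      ‖(P^[n] u) t - (P^[n] v) t‖ ≤ (L:ℝ) ^ n * |(t:ℝ)| ^ n / n.factorial * dist u v := by
    intro n
    induction n with
    | zero =>
      intro u v t
      simpa [dist_eq_norm] using ContinuousMap.dist_apply_le_dist (f := u) (g := v) t
    | succ n ih =>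
      intro u v t
      rw [Function.iterate_succ_apply', Function.iterate_succ_apply']
      have hsub : (P (P^[n] u)) t - (P (P^[n] v)) t
          = ∫ s in (0:ℝ)..(t:ℝ), (F ((P^[n] u) (proj s)) - F ((P^[n] v) (proj s))) := by
        show (x₀ + ∫ s in (0:ℝ)..(t:ℝ), F ((P^[n] u) (proj s)))
          - (x₀ + ∫ s in (0:ℝ)..(t:ℝ), F ((P^[n] v) (proj s))) = _
        rw [intervalIntegral.integral_sub ((hext _).intervalIntegrable 0 t)
          ((hext _).intervalIntegrable 0 t)]
        abel
      rw [hsub]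
      have hc : (0:ℝ) ≤ (L:ℝ) ^ (n+1) / n.factorial * dist u v := by positivity
      have := key_int_bound ((hext (P^[n] u)).sub (hext (P^[n] v))) n hc (t:ℝ) ?_
      · calc ‖∫ s in (0:ℝ)..(t:ℝ), (F ((P^[n] u) (proj s)) - F ((P^[n] v) (proj s)))‖
            ≤ (L:ℝ) ^ (n+1) / n.factorial * dist u v * |(t:ℝ)| ^ (n+1) / (n+1) := this
          _ = (L:ℝ) ^ (n+1) * |(t:ℝ)| ^ (n+1) / (n+1).factorial * dist u v := by
            rw [Nat.factorial_succ]
            have hfac : ((n.factorial : ℝ)) ≠ 0 := by positivity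
            have hn1 : ((n:ℝ) + 1) ≠ 0 := by positivity
            push_cast
            field_simp
      · intro s hs
        have hsI : s ∈ Ic := by
          rcases Set.mem_uIcc.1 hs with ⟨h1, h2⟩ | ⟨h1, h2⟩
          · exact ⟨by linarith, le_trans h2 t.2.2⟩
          · exact ⟨le_trans t.2.1 h1, by linarith⟩
        have h1 : ‖F ((P^[n] u) (proj s)) - F ((P^[n] v) (proj s))‖
            ≤ (L:ℝ) * ‖(P^[n] u) (proj s) - (P^[n] v) (proj s)‖ := by
          have := hF.dist_le_mul ((P^[n] u) (proj s)) ((P^[n] v) (proj s))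
          simpa [dist_eq_norm] using this
        have h2 := ih u v (proj s)
        rw [hprojmem s hsI] at h2
        calc ‖F ((P^[n] u) (proj s)) - F ((P^[n] v) (proj s))‖
            ≤ (L:ℝ) * ((L:ℝ) ^ n * |s| ^ n / n.factorial * dist u v) :=
              h1.trans (by
                have hL : (0:ℝ) ≤ (L:ℝ) := L.2
                exact mul_le_mul_of_nonneg_left h2 hL)
          _ = (L:ℝ) ^ (n+1) / n.factorial * dist u v * |s| ^ n := by ring
  -- contraction of an iterate
  have hdist : ∀ n : ℕ, ∀ u v : C(Ic, E),
      dist (P^[n] u) (P^[n] v) ≤ ((L:ℝ) * a) ^ n / n.factorial * dist u v := by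
    intro n u v
    rw [ContinuousMap.dist_le (by positivity)]
    intro t
    have h1 := key n u v t
    have habs : |(t:ℝ)| ≤ a := abs_le.2 ⟨t.2.1, t.2.2⟩
    rw [dist_eq_norm]
    calc ‖(P^[n] u) t - (P^[n] v) t‖ ≤ (L:ℝ) ^ n * |(t:ℝ)| ^ n / n.factorial * dist u v := h1
      _ ≤ (L:ℝ) ^ n * a ^ n / n.factorial * dist u v := by
          gcongr
      _ = ((L:ℝ) * a) ^ n / n.factorial * dist u v := by rw [mul_pow]
  obtain ⟨n, hn⟩ : ∃ n : ℕ, ((L:ℝ) * a) ^ n / n.factorial < 1 := by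
    have := (Real.summable_pow_div_factorial ((L:ℝ) * a)).tendsto_atTop_zero
    exact ((this.eventually (gt_mem_nhds one_pos)).exists)
  have hnn : (0:ℝ) ≤ ((L:ℝ) * a) ^ n / n.factorial := by positivity
  have hcontr : ContractingWith ⟨_, hnn⟩ (P^[n]) := by
    constructor
    · exact_mod_cast hn
    · exact LipschitzWith.of_dist_le_mul fun u v => hdist n u v
  have hne : Nonempty C(Ic, E) := ⟨ContinuousMap.const _ x₀⟩
  let y : C(Ic, E) := hcontr.fixedPoint (P^[n])
  have hy : P^[n] y = y := hcontr.fixedPoint_isFixedPt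
  have hPy : P y = y := by
    have h1 : P^[n] (P y) = P y := by
      rw [← Function.iterate_succ_apply, Function.iterate_succ_apply', hy]
    have h2 := hcontr.fixedPoint_unique h1
    have h3 := hcontr.fixedPoint_unique (hy)
    rw [h2, ← h3]
  -- the solution
  refine ⟨fun t => x₀ + ∫ s in (0:ℝ)..t, F (y (proj s)), by simp, ?_⟩
  intro t ht
  have hw : ∀ s, s ∈ Ic → (x₀ + ∫ σ in (0:ℝ)..s, F (y (proj σ))) = y (proj s) := by
    intro s hs
    have : (P y) (proj s) = y (proj s) := by rw [hPy]
    rw [← this]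
    show x₀ + ∫ σ in (0:ℝ)..s, F (y (proj σ)) = x₀ + ∫ σ in (0:ℝ)..((proj s : ℝ)), F (y (proj σ))
    rw [hprojmem s hs]
  have hd := hderiv y t
  have : F (y (proj t)) = F (x₀ + ∫ σ in (0:ℝ)..t, F (y (proj σ))) := by rw [hw t ht]
  rwa [this] at hd


/-- Uniqueness on a symmetric interval. -/
lemma uniq_on (hF : LipschitzWith L F) {f g : ℝ → E} {b : ℝ} (hb : 0 < b)
    (hf : ∀ t ∈ Set.Icc (-b) b, HasDerivAt f (F (f t)) t)
    (hg : ∀ t ∈ Set.Icc (-b) b, HasDerivAt g (F (g t)) t)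
    (h0 : f 0 = g 0) : Set.EqOn f g (Set.Icc (-b) b) := by
  apply ODE_solution_unique_of_mem_Icc (v := fun _ x => F x) (s := fun _ => Set.univ)
    (K := L) (t₀ := 0)
    (fun _ _ => hF.lipschitzOnWith)
    (Set.mem_Ioo.2 ⟨by linarith, hb⟩)
    (fun t ht => ((hf t ht).continuousAt).continuousWithinAt)
    (fun t ht => hf t (Set.Ioo_subset_Icc_self ht))
    (fun _ _ => Set.mem_univ _)
    (fun t ht => ((hg t ht).continuousAt).continuousWithinAt)
    (fun t ht => hg t (Set.Ioo_subset_Icc_self ht))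
    (fun _ _ => Set.mem_univ _)
    h0

/-- Global existence for globally Lipschitz autonomous ODEs. -/
lemma exists_global_sol (hF : LipschitzWith L F) (x₀ : E) :
    ∃ u : ℝ → E, u 0 = x₀ ∧ ∀ t, HasDerivAt u (F (u t)) t := by
  choose W hW0 hWd using fun n : ℕ =>
    exists_local_sol hF x₀ (by positivity : (0:ℝ) < (n:ℝ) + 1)
  have hcons : ∀ (m n : ℕ) (s : ℝ), |s| ≤ (m:ℝ) + 1 → |s| ≤ (n:ℝ) + 1 → W m s = W n s := by
    intro m n s h1 h2
    set b : ℝ := min ((m:ℝ)+1) ((n:ℝ)+1) with hbdef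
    have hb : 0 < b := lt_min (by positivity) (by positivity)
    have hmem : s ∈ Set.Icc (-b) b := abs_le.1 (le_min h1 h2)
    refine uniq_on hF hb ?_ ?_ (by rw [hW0 m, hW0 n]) hmem
    · intro t ht
      exact hWd m t ⟨le_trans (neg_le_neg (min_le_left _ _)) ht.1, ht.2.trans (min_le_left _ _)⟩
    · intro t ht
      exact hWd n t ⟨le_trans (neg_le_neg (min_le_right _ _)) ht.1, ht.2.trans (min_le_right _ _)⟩
  refine ⟨fun t => W ⌈|t|⌉₊ t, ?_, ?_⟩
  · simpa using hW0 0
  · intro t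
    set M : ℕ := ⌈|t|⌉₊ + 1 with hM
    have htM : |t| ≤ (M:ℝ) + 1 := by
      have := Nat.le_ceil |t|
      push_cast [hM]
      linarith
    have hWM : HasDerivAt (W M) (F (W M t)) t := hWd M t (abs_le.1 htM)
    have heq : (fun s => W ⌈|s|⌉₊ s) =ᶠ[𝓝 t] W M := by
      filter_upwards [Metric.ball_mem_nhds t one_pos] with s hs
      have hst : |s - t| < 1 := by rwa [Metric.mem_ball, Real.dist_eq] at hs
      have h1 : |s| ≤ (⌈|s|⌉₊:ℝ) + 1 := by linarith [Nat.le_ceil |s|]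
      have h2 : |s| ≤ (M:ℝ) + 1 := by
        have : |s| ≤ |t| + |s - t| := by
          calc |s| = |t + (s - t)| := by ring_nf
            _ ≤ |t| + |s - t| := abs_add_le _ _
        have h3 : ((⌈|t|⌉₊:ℝ)) ≥ |t| := Nat.le_ceil _
        push_cast [hM]
        linarith
      exact hcons _ _ s h1 h2
    have hval : W ⌈|t|⌉₊ t = W M t := by
      refine hcons _ _ t (by linarith [Nat.le_ceil |t|]) htM
    rw [show F (W ⌈|t|⌉₊ t) = F (W M t) by rw [hval]] at *
    exact hWM.congr_of_eventuallyEq heq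

/-- Global uniqueness. -/
lemma global_unique (hF : LipschitzWith L F) {f g : ℝ → E}
    (hf : ∀ t, HasDerivAt f (F (f t)) t) (hg : ∀ t, HasDerivAt g (F (g t)) t)
    (h0 : f 0 = g 0) : f = g := by
  funext t
  have hb : (0:ℝ) < |t| + 1 := by positivity
  exact uniq_on hF hb (fun s _ => hf s) (fun s _ => hg s) h0
    (abs_le.1 (by linarith [le_abs_self t, neg_abs_le t]))

/-- Continuous dependence via Grönwall. -/
lemma gronwall_dep (hF : LipschitzWith L F) {f g : ℝ → E}
    (hf : ∀ t, HasDerivAt f (F (f t)) t) (hg : ∀ t, HasDerivAt g (F (g t)) t) (t : ℝ) :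
    dist (f t) (g t) ≤ dist (f 0) (g 0) * Real.exp ((L:ℝ) * |t|) := by
  rcases le_total 0 t with ht | ht
  · have := dist_le_of_trajectories_ODE (v := fun _ x => F x) (K := L)
      (fun _ => hF)
      (fun s _ => (hf s).continuousAt.continuousWithinAt)
      (fun s _ => (hf s).hasDerivWithinAt)
      (fun s _ => (hg s).continuousAt.continuousWithinAt)
      (fun s _ => (hg s).hasDerivWithinAt)
      (le_refl (dist (f 0) (g 0))) t (Set.mem_Icc.2 ⟨ht, le_refl t⟩)
    simpa [abs_of_nonneg ht] using this
  · have hF' : LipschitzWith L (fun x => -F x) :=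
      LipschitzWith.of_dist_le_mul fun x y => by
        simpa only [dist_neg_neg] using hF.dist_le_mul x y
    have hfd : ∀ s : ℝ, HasDerivAt (fun σ => f (-σ)) (-F (f (-s))) s := by
      intro s
      have := (hf (-s)).scomp s (hasDerivAt_neg s)
      simpa [Function.comp_def] using this
    have hgd : ∀ s : ℝ, HasDerivAt (fun σ => g (-σ)) (-F (g (-s))) s := by
      intro s
      have := (hg (-s)).scomp s (hasDerivAt_neg s)
      simpa [Function.comp_def] using this
    have := dist_le_of_trajectories_ODE (v := fun _ x => -F x) (K := L)
      (a := 0) (b := -t) (δ := dist (f 0) (g 0))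
      (fun _ => hF')
      (f := fun σ => f (-σ)) (g := fun σ => g (-σ))
      (fun s _ => (hfd s).continuousAt.continuousWithinAt)
      (fun s _ => (hfd s).hasDerivWithinAt)
      (fun s _ => (hgd s).continuousAt.continuousWithinAt)
      (fun s _ => (hgd s).hasDerivWithinAt)
      (by simp) (-t) (Set.mem_Icc.2 ⟨by linarith, le_refl (-t)⟩)
    simpa [abs_of_nonpos ht] using this

/-- The constructed solutions are `C¹`. -/
lemma contDiff_of_deriv (hF : LipschitzWith L F) {u : ℝ → E}
    (hu : ∀ t, HasDerivAt u (F (u t)) t) : ContDiff ℝ 1 u := by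
  rw [contDiff_one_iff_deriv]
  have hdiff : Differentiable ℝ u := fun t => (hu t).differentiableAt
  refine ⟨hdiff, ?_⟩
  have : deriv u = fun t => F (u t) := funext fun t => (hu t).deriv
  rw [this]
  exact hF.continuous.comp hdiff.continuous



instance : IsProbabilityMeasure μI := by
  constructor
  rw [μI, Measure.restrict_apply_univ, Real.volume_Icc]
  norm_num

lemma setInt_eq (g : ℝ → ℝ) : (∫ y in Set.Icc (0:ℝ) 1, g y) = ∫ y, g y ∂μI := rfl

lemma W2_nonneg (κ x y : ℝ) : 0 ≤ W2 κ x y := by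
  unfold W2; split <;> norm_num

lemma W2_le_one (κ x y : ℝ) : W2 κ x y ≤ 1 := by
  unfold W2; split <;> norm_num

lemma abs_W2_le_one (κ x y : ℝ) : |W2 κ x y| ≤ 1 := by
  rw [abs_of_nonneg (W2_nonneg κ x y)]; exact W2_le_one κ x y

lemma measurable_W2 (κ : ℝ) : Measurable (fun q : ℝ × ℝ => W2 κ q.1 q.2) := by
  unfold W2
  refine Measurable.ite ?_ measurable_const measurable_const
  have hm : Measurable fun q : ℝ × ℝ => |q.1 - q.2| :=
    (measurable_fst.sub measurable_snd).abs
  exact ((measurableSet_le hm measurable_const).union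
    (measurableSet_le measurable_const hm))

lemma sin_lip (a b : ℝ) : |Real.sin a - Real.sin b| ≤ |a - b| := by
  rw [Real.sin_sub_sin]
  calc |2 * Real.sin ((a - b) / 2) * Real.cos ((a + b) / 2)|
      = 2 * |Real.sin ((a - b) / 2)| * |Real.cos ((a + b) / 2)| := by
        rw [abs_mul, abs_mul]; norm_num
    _ ≤ 2 * |(a - b) / 2| * 1 := by
        have h1 : |Real.sin ((a - b) / 2)| ≤ |(a - b) / 2| := Real.abs_sin_le_abs
        have h2 : |Real.cos ((a + b) / 2)| ≤ 1 := Real.abs_cos_le_one _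
        exact mul_le_mul (by linarith) h2 (abs_nonneg _) (by positivity)
    _ = |a - b| := by rw [abs_div, abs_two]; ring


lemma abs_sin_le_one' (x : ℝ) : |Real.sin x| ≤ 1 :=
  abs_le.2 ⟨Real.neg_one_le_sin x, Real.sin_le_one x⟩

lemma integrable_of_bound {h : ℝ → ℝ} (hm : Measurable h) {C : ℝ} (hb : ∀ y, |h y| ≤ C) :
    Integrable h μI :=
  ⟨hm.aestronglyMeasurable, HasFiniteIntegral.of_bounded (C := C)
    (ae_of_all _ (by simpa [Real.norm_eq_abs] using hb))⟩

lemma CLrhs_raw (ω p K κ : ℝ) (f : ℝ → ℝ) (x : ℝ) :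
    CLrhs ω p K κ f x = ω + p * ∫ y, (Real.sin (f y - f x)
      - K * ∫ z, W2 κ x z * Real.sin (2 * (f z - f x)) ∂μI) ∂μI := rfl

lemma int_sin_integrable {f : ℝ → ℝ} (hf : Measurable f) (x : ℝ) :
    Integrable (fun y => Real.sin (f y - f x)) μI :=
  integrable_of_bound (Real.measurable_sin.comp (hf.sub measurable_const))
    (fun _ => abs_sin_le_one' _)

lemma CLrhs_eq (ω p K κ : ℝ) {f : ℝ → ℝ} (hf : Measurable f) (x : ℝ) :
    CLrhs ω p K κ f x = ω + p * (∫ y, Real.sin (f y - f x) ∂μI)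
      - p * K * (∫ y, W2 κ x y * Real.sin (2 * (f y - f x)) ∂μI) := by
  rw [CLrhs_raw, integral_sub (int_sin_integrable hf x) (integrable_const _), integral_const]
  simp only [probReal_univ, smul_eq_mul, one_mul]
  ring

lemma measurable_CLrhs (ω p K κ : ℝ) {f : ℝ → ℝ} (hf : Measurable f) :
    Measurable (CLrhs ω p K κ f) := by
  have h1 : StronglyMeasurable (Function.uncurry fun x y => Real.sin (f y - f x)) :=
    (Real.measurable_sin.comp ((hf.comp measurable_snd).sub
      (hf.comp measurable_fst))).stronglyMeasurable
  have hI1 : Measurable fun x => ∫ y, Real.sin (f y - f x) ∂μI :=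
    h1.integral_prod_right.measurable
  have h2 : StronglyMeasurable (Function.uncurry fun x y =>
      W2 κ x y * Real.sin (2 * (f y - f x))) := by
    refine Measurable.stronglyMeasurable ?_
    exact (measurable_W2 κ).mul
      (Real.measurable_sin.comp ((measurable_const.mul ((hf.comp measurable_snd).sub
        (hf.comp measurable_fst)))))
  have hI2 : Measurable fun x => ∫ y, W2 κ x y * Real.sin (2 * (f y - f x)) ∂μI :=
    h2.integral_prod_right.measurable
  have : CLrhs ω p K κ f = fun x => ω + p * (∫ y, Real.sin (f y - f x) ∂μI)
      - p * K * (∫ y, W2 κ x y * Real.sin (2 * (f y - f x)) ∂μI) :=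
    funext fun x => CLrhs_eq ω p K κ hf x
  rw [this]
  exact (measurable_const.add (hI1.const_mul p)).sub (hI2.const_mul (p * K))

lemma int_sin_bound (f : ℝ → ℝ) (x : ℝ) : |∫ y, Real.sin (f y - f x) ∂μI| ≤ 1 := by
  have := norm_integral_le_of_norm_le_const (μ := μI)
    (f := fun y => Real.sin (f y - f x)) (C := 1)
    (ae_of_all _ fun y => by simpa [Real.norm_eq_abs] using abs_sin_le_one' (f y - f x))
  simpa [Real.norm_eq_abs] using this

lemma int_W2_bound (κ : ℝ) (f : ℝ → ℝ) (x : ℝ) :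
    |∫ y, W2 κ x y * Real.sin (2 * (f y - f x)) ∂μI| ≤ 1 := by
  have := norm_integral_le_of_norm_le_const (μ := μI)
    (f := fun y => W2 κ x y * Real.sin (2 * (f y - f x))) (C := 1)
    (ae_of_all _ fun y => by
      rw [Real.norm_eq_abs, abs_mul]
      calc |W2 κ x y| * |Real.sin (2 * (f y - f x))| ≤ 1 * 1 :=
        mul_le_mul (abs_W2_le_one κ x y) (abs_sin_le_one' _) (abs_nonneg _) zero_le_one
      _ = 1 := by norm_num)
  simpa [Real.norm_eq_abs] using this

lemma abs_CLrhs_le (ω p K κ : ℝ) {f : ℝ → ℝ} (hf : Measurable f) (x : ℝ) :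
    |CLrhs ω p K κ f x| ≤ |ω| + |p| + |p * K| := by
  rw [CLrhs_eq ω p K κ hf x]
  have h1 := int_sin_bound f x
  have h2 := int_W2_bound κ f x
  calc |ω + p * (∫ y, Real.sin (f y - f x) ∂μI)
        - p * K * ∫ y, W2 κ x y * Real.sin (2 * (f y - f x)) ∂μI|
      ≤ |ω + p * (∫ y, Real.sin (f y - f x) ∂μI)|
        + |p * K * ∫ y, W2 κ x y * Real.sin (2 * (f y - f x)) ∂μI| := abs_sub _ _
    _ ≤ (|ω| + |p * (∫ y, Real.sin (f y - f x) ∂μI)|)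
        + |p * K * ∫ y, W2 κ x y * Real.sin (2 * (f y - f x)) ∂μI| := by
        gcongr
        exact abs_add_le _ _
    _ ≤ |ω| + |p| + |p * K| := by
        rw [abs_mul, abs_mul (p*K)]
        have e1 : |p| * |(∫ y, Real.sin (f y - f x) ∂μI)| ≤ |p| * 1 :=
          mul_le_mul_of_nonneg_left h1 (abs_nonneg p)
        have e2 : |p * K| * |(∫ y, W2 κ x y * Real.sin (2 * (f y - f x)) ∂μI)| ≤ |p * K| * 1 :=
          mul_le_mul_of_nonneg_left h2 (abs_nonneg _)
        linarith

lemma memℒp_CLrhs (ω p K κ : ℝ) (f : L2I) : MemLp (CLrhs ω p K κ (f : ℝ → ℝ)) 2 μI := by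
  refine MemLp.of_bound
    ((measurable_CLrhs ω p K κ (Lp.stronglyMeasurable f).measurable).aestronglyMeasurable)
    (|ω| + |p| + |p * K|) (ae_of_all _ fun x => ?_)
  simpa [Real.norm_eq_abs] using abs_CLrhs_le ω p K κ (Lp.stronglyMeasurable f).measurable x

/-- The right-hand side as a self-map of `L²(I)`. -/
def Fm (ω p K κ : ℝ) (f : L2I) : L2I := (memℒp_CLrhs ω p K κ f).toLp _

lemma coe_Fm (ω p K κ : ℝ) (f : L2I) :
    (Fm ω p K κ f : ℝ → ℝ) =ᵐ[μI] CLrhs ω p K κ (f : ℝ → ℝ) :=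
  MemLp.coeFn_toLp _

lemma CLrhs_sub_bound (ω p K κ : ℝ) (hp : 0 ≤ p) {f g : ℝ → ℝ}
    (hf : Measurable f) (hg : Measurable g)
    (hfg : Integrable (fun y => |f y - g y|) μI) (x : ℝ) :
    |CLrhs ω p K κ f x - CLrhs ω p K κ g x|
      ≤ (p * (1 + 2*|K|)) * ((∫ y, |f y - g y| ∂μI) + |f x - g x|) := by
  set J := ∫ y, |f y - g y| ∂μI with hJdef
  have hJ0 : 0 ≤ J := integral_nonneg fun y => abs_nonneg _
  have hd0 : 0 ≤ |f x - g x| := abs_nonneg _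
  -- integrability facts
  have int1f := int_sin_integrable hf x
  have int1g := int_sin_integrable hg x
  have hW2y : Measurable fun y => W2 κ x y := (measurable_W2 κ).comp (measurable_prodMk_left)
  have int2f : Integrable (fun y => W2 κ x y * Real.sin (2 * (f y - f x))) μI := by
    refine integrable_of_bound (hW2y.mul (Real.measurable_sin.comp
      (measurable_const.mul (hf.sub measurable_const)))) (C := 1) (fun y => ?_)
    rw [abs_mul]
    calc |W2 κ x y| * |Real.sin (2 * (f y - f x))| ≤ 1 * 1 :=
      mul_le_mul (abs_W2_le_one κ x y) (abs_sin_le_one' _) (abs_nonneg _) zero_le_one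
    _ = 1 := by norm_num
  have int2g : Integrable (fun y => W2 κ x y * Real.sin (2 * (g y - g x))) μI := by
    refine integrable_of_bound (hW2y.mul (Real.measurable_sin.comp
      (measurable_const.mul (hg.sub measurable_const)))) (C := 1) (fun y => ?_)
    rw [abs_mul]
    calc |W2 κ x y| * |Real.sin (2 * (g y - g x))| ≤ 1 * 1 :=
      mul_le_mul (abs_W2_le_one κ x y) (abs_sin_le_one' _) (abs_nonneg _) zero_le_one
    _ = 1 := by norm_num
  have hbound : Integrable (fun y => |f y - g y| + |f x - g x|) μI :=
    hfg.add (integrable_const _)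
  -- first integral difference
  have hI1 : |(∫ y, Real.sin (f y - f x) ∂μI) - ∫ y, Real.sin (g y - g x) ∂μI|
      ≤ J + |f x - g x| := by
    rw [← integral_sub int1f int1g]
    calc |∫ y, (Real.sin (f y - f x) - Real.sin (g y - g x)) ∂μI|
        ≤ ∫ y, |Real.sin (f y - f x) - Real.sin (g y - g x)| ∂μI :=
          by simpa [Real.norm_eq_abs] using
            norm_integral_le_integral_norm (fun y => Real.sin (f y - f x) - Real.sin (g y - g x))
      _ ≤ ∫ y, (|f y - g y| + |f x - g x|) ∂μI := by
          refine integral_mono (int1f.sub int1g).abs hbound fun y => ?_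
          calc |Real.sin (f y - f x) - Real.sin (g y - g x)|
              ≤ |(f y - f x) - (g y - g x)| := sin_lip _ _
            _ = |(f y - g y) - (f x - g x)| := by ring_nf
            _ ≤ |f y - g y| + |f x - g x| := abs_sub _ _
      _ = J + |f x - g x| := by
          rw [integral_add hfg (integrable_const _), integral_const]
          simp [hJdef]
  -- second integral difference
  have hI2 : |(∫ y, W2 κ x y * Real.sin (2 * (f y - f x)) ∂μI)
        - ∫ y, W2 κ x y * Real.sin (2 * (g y - g x)) ∂μI|
      ≤ 2 * (J + |f x - g x|) := by
    rw [← integral_sub int2f int2g]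
    calc |∫ y, (W2 κ x y * Real.sin (2 * (f y - f x))
            - W2 κ x y * Real.sin (2 * (g y - g x))) ∂μI|
        ≤ ∫ y, |W2 κ x y * Real.sin (2 * (f y - f x))
            - W2 κ x y * Real.sin (2 * (g y - g x))| ∂μI := by
          simpa [Real.norm_eq_abs] using
            norm_integral_le_integral_norm (fun y => W2 κ x y * Real.sin (2 * (f y - f x))
              - W2 κ x y * Real.sin (2 * (g y - g x)))
      _ ≤ ∫ y, 2 * (|f y - g y| + |f x - g x|) ∂μI := by
          refine integral_mono (int2f.sub int2g).abs (hbound.const_mul 2) fun y => ?_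
          have h1 : |W2 κ x y * Real.sin (2 * (f y - f x))
              - W2 κ x y * Real.sin (2 * (g y - g x))|
              = |W2 κ x y| * |Real.sin (2 * (f y - f x)) - Real.sin (2 * (g y - g x))| := by
            rw [← mul_sub, abs_mul]
          rw [h1]
          calc |W2 κ x y| * |Real.sin (2 * (f y - f x)) - Real.sin (2 * (g y - g x))|
              ≤ 1 * |Real.sin (2 * (f y - f x)) - Real.sin (2 * (g y - g x))| :=
                mul_le_mul_of_nonneg_right (abs_W2_le_one κ x y) (abs_nonneg _)
            _ = |Real.sin (2 * (f y - f x)) - Real.sin (2 * (g y - g x))| := one_mul _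
            _ ≤ |2 * (f y - f x) - 2 * (g y - g x)| := sin_lip _ _
            _ = 2 * |(f y - g y) - (f x - g x)| := by
                rw [show (2:ℝ) * (f y - f x) - 2 * (g y - g x)
                  = 2 * ((f y - g y) - (f x - g x)) by ring, abs_mul, abs_two]
            _ ≤ 2 * (|f y - g y| + |f x - g x|) := by
                have := abs_sub (f y - g y) (f x - g x)
                linarith
      _ = 2 * (J + |f x - g x|) := by
          rw [integral_const_mul, integral_add hfg (integrable_const _), integral_const]
          simp [hJdef]
  -- combine
  have hsplit : CLrhs ω p K κ f x - CLrhs ω p K κ g x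
      = p * ((∫ y, Real.sin (f y - f x) ∂μI) - ∫ y, Real.sin (g y - g x) ∂μI)
        - p * K * ((∫ y, W2 κ x y * Real.sin (2 * (f y - f x)) ∂μI)
          - ∫ y, W2 κ x y * Real.sin (2 * (g y - g x)) ∂μI) := by
    rw [CLrhs_eq ω p K κ hf x, CLrhs_eq ω p K κ hg x]
    ring
  rw [hsplit]
  have habs : |p * ((∫ y, Real.sin (f y - f x) ∂μI) - ∫ y, Real.sin (g y - g x) ∂μI)
        - p * K * ((∫ y, W2 κ x y * Real.sin (2 * (f y - f x)) ∂μI)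
          - ∫ y, W2 κ x y * Real.sin (2 * (g y - g x)) ∂μI)|
      ≤ |p| * |(∫ y, Real.sin (f y - f x) ∂μI) - ∫ y, Real.sin (g y - g x) ∂μI|
        + |p * K| * |(∫ y, W2 κ x y * Real.sin (2 * (f y - f x)) ∂μI)
          - ∫ y, W2 κ x y * Real.sin (2 * (g y - g x)) ∂μI| := by
    calc _ ≤ |p * ((∫ y, Real.sin (f y - f x) ∂μI) - ∫ y, Real.sin (g y - g x) ∂μI)|
        + |p * K * ((∫ y, W2 κ x y * Real.sin (2 * (f y - f x)) ∂μI)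
          - ∫ y, W2 κ x y * Real.sin (2 * (g y - g x)) ∂μI)| := abs_sub _ _
      _ = _ := by rw [abs_mul, abs_mul (p*K)]
  calc _ ≤ |p| * |(∫ y, Real.sin (f y - f x) ∂μI) - ∫ y, Real.sin (g y - g x) ∂μI|
        + |p * K| * |(∫ y, W2 κ x y * Real.sin (2 * (f y - f x)) ∂μI)
          - ∫ y, W2 κ x y * Real.sin (2 * (g y - g x)) ∂μI| := habs
    _ ≤ |p| * (J + |f x - g x|) + |p * K| * (2 * (J + |f x - g x|)) := by gcongr
    _ = (p * (1 + 2*|K|)) * (J + |f x - g x|) := by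
        rw [abs_of_nonneg hp, abs_mul, abs_of_nonneg hp]
        ring

lemma J_le_norm (f g : L2I) :
    (∫ y, |(f : ℝ → ℝ) y - (g : ℝ → ℝ) y| ∂μI) ≤ ‖f - g‖ := by
  set φ : ℝ → ℝ := (f : ℝ → ℝ) with hφ
  set γ : ℝ → ℝ := (g : ℝ → ℝ) with hγ
  have hmem : MemLp (fun y => φ y - γ y) 2 μI := (Lp.memLp f).sub (Lp.memLp g)
  have h1 : (∫ y, |φ y - γ y| ∂μI) = (eLpNorm (fun y => φ y - γ y) 1 μI).toReal := by
    rw [eLpNorm_one_eq_lintegral_enorm]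
    have := integral_norm_eq_lintegral_enorm (f := fun y => φ y - γ y) (μ := μI)
      hmem.aestronglyMeasurable
    simpa [Real.norm_eq_abs] using this
  have h2 : eLpNorm (fun y => φ y - γ y) 1 μI ≤ eLpNorm (fun y => φ y - γ y) 2 μI :=
    eLpNorm_le_eLpNorm_of_exponent_le (by norm_num) hmem.aestronglyMeasurable
  have h3 : ‖f - g‖ = (eLpNorm (fun y => φ y - γ y) 2 μI).toReal := by
    rw [Lp.norm_def]
    congr 1
    apply eLpNorm_congr_ae
    exact (Lp.coeFn_sub f g)
  rw [h1, h3]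
  exact ENNReal.toReal_mono hmem.2.ne h2

lemma norm_Fm_sub_le (ω p K κ : ℝ) (hp : 0 ≤ p) (f g : L2I) :
    ‖Fm ω p K κ f - Fm ω p K κ g‖ ≤ (2 * (p * (1 + 2*|K|))) * ‖f - g‖ := by
  set c : ℝ := p * (1 + 2*|K|) with hc
  have hc0 : 0 ≤ c := by positivity
  set φ : ℝ → ℝ := (f : ℝ → ℝ) with hφ
  set γ : ℝ → ℝ := (g : ℝ → ℝ) with hγ
  have hmf : Measurable φ := (Lp.stronglyMeasurable f).measurable
  have hmg : Measurable γ := (Lp.stronglyMeasurable g).measurable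
  have hmem : MemLp (fun y => φ y - γ y) 2 μI := (Lp.memLp f).sub (Lp.memLp g)
  have hfg : Integrable (fun y => |φ y - γ y|) μI := by
    have := (hmem.integrable (by norm_num)).abs
    simpa using this
  set J : ℝ := ∫ y, |φ y - γ y| ∂μI with hJ
  have hJ0 : 0 ≤ J := integral_nonneg fun y => abs_nonneg _
  set b1 : ℝ → ℝ := fun _ => c * J with hb1
  set b2 : ℝ → ℝ := fun x => c * |φ x - γ x| with hb2
  have hmb1 : MemLp b1 2 μI := memLp_const _
  have hmb2 : MemLp b2 2 μI := by
    have habs : MemLp (fun x => |φ x - γ x|) 2 μI := by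
      have := hmem.norm
      simpa [Real.norm_eq_abs] using this
    exact habs.const_mul c
  -- pointwise bound
  have hptwise : ∀ x, |CLrhs ω p K κ φ x - CLrhs ω p K κ γ x| ≤ b1 x + b2 x := fun x => by
    have := CLrhs_sub_bound ω p K κ hp hmf hmg hfg x
    simp only [hb1, hb2, hJ]
    calc |CLrhs ω p K κ φ x - CLrhs ω p K κ γ x|
        ≤ c * ((∫ y, |φ y - γ y| ∂μI) + |φ x - γ x|) := this
      _ = c * (∫ y, |φ y - γ y| ∂μI) + c * |φ x - γ x| := by ring
  -- norm estimate
  have step1 : ‖Fm ω p K κ f - Fm ω p K κ g‖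
      = (eLpNorm (fun x => CLrhs ω p K κ φ x - CLrhs ω p K κ γ x) 2 μI).toReal := by
    rw [Lp.norm_def]
    congr 1
    apply eLpNorm_congr_ae
    filter_upwards [Lp.coeFn_sub (Fm ω p K κ f) (Fm ω p K κ g), coe_Fm ω p K κ f,
      coe_Fm ω p K κ g] with x h1 h2 h3
    rw [h1, Pi.sub_apply, h2, h3]
  have step2 : eLpNorm (fun x => CLrhs ω p K κ φ x - CLrhs ω p K κ γ x) 2 μI
      ≤ eLpNorm (b1 + b2) 2 μI := by
    apply eLpNorm_mono_ae
    refine ae_of_all _ fun x => ?_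
    rw [Real.norm_eq_abs, Real.norm_eq_abs]
    exact (hptwise x).trans (le_abs_self _)
  have hmb : MemLp (b1 + b2) 2 μI := hmb1.add hmb2
  have step3 : (eLpNorm (b1 + b2) 2 μI).toReal = ‖hmb1.toLp b1 + hmb2.toLp b2‖ := by
    rw [← MemLp.toLp_add, Lp.norm_toLp]
  have step4 : ‖hmb1.toLp b1‖ = c * J := by
    rw [Lp.norm_toLp]
    have : eLpNorm b1 2 μI = ‖c * J‖₊ := by
      rw [hb1, eLpNorm_const _ (by norm_num) (IsProbabilityMeasure.ne_zero μI)]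
      simp [measure_univ, enorm_eq_nnnorm]
    rw [this]
    simp [abs_mul, abs_of_nonneg hc0, abs_of_nonneg hJ0]
  have step5 : ‖hmb2.toLp b2‖ ≤ c * ‖f - g‖ := by
    rw [Lp.norm_toLp]
    have h1 : eLpNorm b2 2 μI = ‖c‖₊ * eLpNorm (fun x => φ x - γ x) 2 μI := by
      have h2 : b2 = c • fun x => ‖φ x - γ x‖ := by
        funext x
        simp [hb2, Real.norm_eq_abs]
      rw [h2, eLpNorm_const_smul, eLpNorm_norm, enorm_eq_nnnorm]
    rw [h1]
    have h3 : ‖f - g‖ = (eLpNorm (fun y => φ y - γ y) 2 μI).toReal := by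
      rw [Lp.norm_def]
      exact congrArg _ (eLpNorm_congr_ae (Lp.coeFn_sub f g))
    rw [ENNReal.toReal_mul, h3]
    have h4 : ((‖c‖₊ : ℝ≥0∞)).toReal = c := by
      simp [Real.norm_eq_abs, abs_of_nonneg hc0]
    rw [h4]
  have hJle : J ≤ ‖f - g‖ := J_le_norm f g
  calc ‖Fm ω p K κ f - Fm ω p K κ g‖
      = (eLpNorm (fun x => CLrhs ω p K κ φ x - CLrhs ω p K κ γ x) 2 μI).toReal := step1
    _ ≤ (eLpNorm (b1 + b2) 2 μI).toReal := ENNReal.toReal_mono hmb.2.ne step2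
    _ = ‖hmb1.toLp b1 + hmb2.toLp b2‖ := step3
    _ ≤ ‖hmb1.toLp b1‖ + ‖hmb2.toLp b2‖ := norm_add_le _ _
    _ ≤ c * J + c * ‖f - g‖ := add_le_add step4.le step5
    _ ≤ (2 * c) * ‖f - g‖ := by nlinarith [norm_nonneg (f - g)]

/-- The Lipschitz constant for `Fm`. -/
def cK (p K : ℝ) : ℝ≥0 := Real.toNNReal (2 * (p * (1 + 2*|K|)))

lemma lip_Fm (ω p K κ : ℝ) (hp : 0 ≤ p) : LipschitzWith (cK p K) (Fm ω p K κ) := by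
  apply LipschitzWith.of_dist_le_mul
  intro f g
  rw [dist_eq_norm, dist_eq_norm]
  have h1 := norm_Fm_sub_le ω p K κ hp f g
  have h2 : ((cK p K : ℝ≥0) : ℝ) = 2 * (p * (1 + 2*|K|)) := by
    rw [cK, Real.coe_toNNReal]
    positivity
  rw [h2]
  exact h1


lemma isCLSol_iff (ω p K κ : ℝ) (u : ℝ → L2I) :
    IsCLSol ω p K κ u ↔ ContDiff ℝ 1 u ∧ ∀ t, HasDerivAt u (Fm ω p K κ (u t)) t := by
  constructor
  · rintro ⟨h1, h2⟩
    refine ⟨h1, fun t => ?_⟩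
    obtain ⟨v, hv, hva⟩ := h2 t
    have hveq : v = Fm ω p K κ (u t) := Lp.ext (hva.trans (coe_Fm ω p K κ (u t)).symm)
    rwa [hveq] at hv
  · rintro ⟨h1, h2⟩
    exact ⟨h1, fun t => ⟨Fm ω p K κ (u t), h2 t, coe_Fm ω p K κ (u t)⟩⟩

end CLAux

/-- Existence, uniqueness, and continuous dependence on initial data for the IVP of the
continuum limit equation. -/
theorem existence_uniqueness_continuous_dependence_CL
    (κ p K ω : ℝ) (hκ : κ ∈ Set.Ioo (0:ℝ) (1/2)) (hp : 0 < p) :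
    (∀ g : L2I, ∃! u : ℝ → L2I, IsCLSol ω p K κ u ∧ u 0 = g) ∧
    (∀ τ > (0:ℝ), ∀ u : ℝ → L2I, IsCLSol ω p K κ u →
      ∀ ε > (0:ℝ), ∃ δ > (0:ℝ), ∀ u' : ℝ → L2I, IsCLSol ω p K κ u' →
        ‖u 0 - u' 0‖ < δ → ∀ t ∈ Set.Icc (-τ) τ, ‖u t - u' t‖ < ε) := by
  have hp0 : 0 ≤ p := hp.le
  have hlip := CLAux.lip_Fm ω p K κ hp0
  constructor
  · intro g
    obtain ⟨u, hu0, hud⟩ := CLAux.exists_global_sol hlip g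
    refine ⟨u, ⟨(CLAux.isCLSol_iff ω p K κ u).2
      ⟨CLAux.contDiff_of_deriv hlip hud, hud⟩, hu0⟩, ?_⟩
    rintro v ⟨hv, hv0⟩
    have hvd := ((CLAux.isCLSol_iff ω p K κ v).1 hv).2
    exact CLAux.global_unique hlip hvd hud (by rw [hv0, hu0])
  · intro τ hτ u hu ε hε
    refine ⟨ε / Real.exp ((CLAux.cK p K : ℝ) * τ), by positivity, ?_⟩
    intro u' hu' hd t ht
    have hud := ((CLAux.isCLSol_iff ω p K κ u).1 hu).2
    have hud' := ((CLAux.isCLSol_iff ω p K κ u').1 hu').2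
    have h1 := CLAux.gronwall_dep hlip hud hud' t
    rw [dist_eq_norm, dist_eq_norm] at h1
    have htau : |t| ≤ τ := abs_le.2 ⟨ht.1, ht.2⟩
    have h2 : Real.exp ((CLAux.cK p K : ℝ) * |t|) ≤ Real.exp ((CLAux.cK p K : ℝ) * τ) :=
      Real.exp_le_exp.2 (mul_le_mul_of_nonneg_left htau (NNReal.coe_nonneg _))
    calc ‖u t - u' t‖ ≤ ‖u 0 - u' 0‖ * Real.exp ((CLAux.cK p K : ℝ) * |t|) := h1
      _ ≤ ‖u 0 - u' 0‖ * Real.exp ((CLAux.cK p K : ℝ) * τ) :=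
          mul_le_mul_of_nonneg_left h2 (norm_nonneg _)
      _ < (ε / Real.exp ((CLAux.cK p K : ℝ) * τ)) * Real.exp ((CLAux.cK p K : ℝ) * τ) :=
          mul_lt_mul_of_pos_right hd (Real.exp_pos _)
      _ = ε := div_mul_cancel₀ ε (Real.exp_ne_zero _)
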